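/- arXiv:1005.2001 — 2 statements merged into one kernel-verified Lean document; each statement's English description precedes it below -/
import Mathlib

section
/- For every positive integer $k$, $\frac{1}{\sqrt{\pi(k + 4/\pi - 1)}} \le \frac{1 \cdot 3 \cdot 5 \cdots (2k-1)}{2 \cdot 4 \cdot 6 \cdots (2k)} \le \frac{1}{\sqrt{\pi(k + 1/4)}}$. -/
open Real Filter Topology Finset

noncomputable def Wr (k : ℕ) : ℝ := (Nat.choose (2 * k) k : ℝ) / 4 ^ k

lemma Wr_pos (k : ℕ) : 0 < Wr k := by
  have h : 0 < (Nat.choose (2 * k) k : ℝ) := by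
    exact_mod_cast Nat.choose_pos (by omega)
  exact div_pos h (by positivity)

lemma Wr_succ (k : ℕ) : Wr (k + 1) = Wr k * ((2 * k + 1) / (2 * k + 2)) := by
  have h := Nat.succ_mul_centralBinom_succ k
  have h' : ((k : ℝ) + 1) * (Nat.centralBinom (k + 1) : ℝ)
      = 2 * (2 * k + 1) * (Nat.centralBinom k : ℝ) := by exact_mod_cast h
  have hc : ∀ n : ℕ, (Nat.centralBinom n : ℝ) = (Nat.choose (2 * n) n : ℝ) := fun n => rfl
  rw [hc, hc] at h'
  have hk1 : ((k : ℝ) + 1) ≠ 0 := by positivity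
  unfold Wr
  have : (Nat.choose (2 * (k + 1)) (k + 1) : ℝ)
      = 2 * (2 * k + 1) * (Nat.choose (2 * k) k : ℝ) / (k + 1) := by
    field_simp at h' ⊢
    linarith [h']
  rw [this]
  have h4 : (4 : ℝ) ^ (k + 1) = 4 ^ k * 4 := by ring
  rw [h4]
  field_simp
  ring

lemma Wr_sq_mul_W (n : ℕ) : Wr n ^ 2 * (2 * n + 1) * Real.Wallis.W n = 1 := by
  induction n with
  | zero => simp [Wr, Real.Wallis.W]
  | succ n ih =>
    rw [Real.Wallis.W_succ, Wr_succ]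
    have h1 : (2 * (n : ℝ) + 1) ≠ 0 := by positivity
    have h2 : (2 * (n : ℝ) + 2) ≠ 0 := by positivity
    have h3 : (2 * (n : ℝ) + 3) ≠ 0 := by positivity
    push_cast
    field_simp
    linear_combination (2*(n:ℝ)+3) * ih

lemma tendsto_Wr_sq (c : ℝ) :
    Tendsto (fun n : ℕ => Wr n ^ 2 * (n + c)) atTop (𝓝 (1 / π)) := by
  have hW : Tendsto (fun n : ℕ => (Real.Wallis.W n)⁻¹) atTop (𝓝 ((π / 2)⁻¹)) :=
    Real.Wallis.tendsto_W_nhds_pi_div_two.inv₀ (by positivity)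
  have hWeq : ∀ n : ℕ, Wr n ^ 2 * (2 * n + 1) = (Real.Wallis.W n)⁻¹ := by
    intro n
    have := Wr_sq_mul_W n
    have hWn := Real.Wallis.W_pos n
    field_simp
    linarith [this]
  have hW' : Tendsto (fun n : ℕ => Wr n ^ 2 * (2 * n + 1)) atTop (𝓝 ((π / 2)⁻¹)) := by
    simpa only [hWeq] using hW
  have hfrac : Tendsto (fun n : ℕ => ((n : ℝ) + c) / (2 * n + 1)) atTop (𝓝 (1 / 2)) := by
    have heq : ∀ n : ℕ, ((n : ℝ) + c) / (2 * n + 1) = 1 / 2 + (c - 1 / 2) / (2 * n + 1) := by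
      intro n
      have h1 : (2 * (n : ℝ) + 1) ≠ 0 := by positivity
      field_simp
      ring
    simp only [heq]
    have htop : Tendsto (fun n : ℕ => 2 * (n : ℝ) + 1) atTop atTop := by
      refine Tendsto.atTop_add ?_ tendsto_const_nhds
      exact tendsto_natCast_atTop_atTop.const_mul_atTop two_pos
    have := (tendsto_const_nhds (X := ℝ) (x := c - 1 / 2)).div_atTop htop
    simpa using tendsto_const_nhds.add this
  have key : Tendsto (fun n : ℕ => Wr n ^ 2 * (2 * n + 1) * (((n : ℝ) + c) / (2 * n + 1)))
      atTop (𝓝 ((π / 2)⁻¹ * (1 / 2))) := hW'.mul hfrac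
  have heq2 : ∀ n : ℕ, Wr n ^ 2 * (2 * n + 1) * (((n : ℝ) + c) / (2 * n + 1))
      = Wr n ^ 2 * (n + c) := by
    intro n
    have h1 : (2 * (n : ℝ) + 1) ≠ 0 := by positivity
    field_simp
  have hval : (π / 2)⁻¹ * (1 / 2) = 1 / π := by
    have := Real.pi_pos
    field_simp
  rw [← hval]
  simpa only [heq2] using key

lemma g_le (k : ℕ) : Wr k ^ 2 * (k + 1 / 4) ≤ 1 / π := by
  have hmono : ∀ n : ℕ, Wr n ^ 2 * (n + 1 / 4) ≤ Wr (n + 1) ^ 2 * ((n : ℝ) + 1 + 1 / 4) := by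
    intro n
    rw [Wr_succ]
    have hp := Wr_pos n
    rw [mul_pow, div_pow, mul_assoc, mul_le_mul_iff_right₀ (by positivity : (0:ℝ) < Wr n ^ 2)]
    rw [div_mul_eq_mul_div, le_div_iff₀ (by positivity)]
    nlinarith [Nat.cast_nonneg (α := ℝ) n]
  have hchain : ∀ n, k ≤ n → Wr k ^ 2 * (k + 1 / 4) ≤ Wr n ^ 2 * (n + 1 / 4) := by
    intro n hn
    induction n with
    | zero =>
      have hk0 : k = 0 := Nat.le_zero.mp hn
      subst hk0; exact le_refl _
    | succ m ih =>
      rcases Nat.lt_or_ge k (m + 1) with h | h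
      · calc Wr k ^ 2 * (k + 1 / 4) ≤ Wr m ^ 2 * (m + 1 / 4) := ih (by omega)
          _ ≤ Wr (m + 1) ^ 2 * ((m : ℝ) + 1 + 1 / 4) := hmono m
          _ = Wr (m + 1) ^ 2 * ((m + 1 : ℕ) + 1 / 4) := by push_cast; ring
      · have : k = m + 1 := by omega
        subst this; exact le_refl _
  refine ge_of_tendsto (tendsto_Wr_sq (1 / 4)) ?_
  filter_upwards [eventually_ge_atTop k] with n hn
  exact hchain n hn

lemma h_ge (k : ℕ) (hk : 1 ≤ k) : 1 / π ≤ Wr k ^ 2 * (k + 4 / π - 1) := by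
  have hpi := Real.pi_pos
  rcases Nat.lt_or_ge k 2 with h1 | h2
  · interval_cases k
    have hw1 : Wr 1 = 1 / 2 := by norm_num [Wr]
    have he : ((1 : ℕ) : ℝ) + 4 / π - 1 = 4 / π := by push_cast; ring
    rw [hw1, he]
    rw [div_le_iff₀ hpi]
    field_simp
    nlinarith
  · have hstep : ∀ n : ℕ, 2 ≤ n →
        Wr (n + 1) ^ 2 * ((n : ℝ) + 1 + 4 / π - 1) ≤ Wr n ^ 2 * (n + 4 / π - 1) := by
      intro n hn
      rw [Wr_succ]
      have hp := Wr_pos n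
      have hn' : (2 : ℝ) ≤ n := by exact_mod_cast hn
      rw [mul_pow, div_pow, mul_assoc, mul_le_mul_iff_right₀ (by positivity : (0:ℝ) < Wr n ^ 2)]
      rw [div_mul_eq_mul_div, div_le_iff₀ (by positivity)]
      have hub := Real.pi_lt_d4
      have hkey : π * (5 * (n : ℝ) + 4) ≤ 16 * n + 12 := by nlinarith
      have ht : (5 : ℝ) * n + 4 ≤ 4 / π * (4 * n + 3) := by
        rw [div_mul_eq_mul_div, le_div_iff₀ hpi]
        nlinarith [hkey]
      nlinarith [ht]
    have hchain : ∀ n, k ≤ n → Wr n ^ 2 * (n + 4 / π - 1) ≤ Wr k ^ 2 * (k + 4 / π - 1) := by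
      intro n hn
      induction n with
      | zero => omega
      | succ m ih =>
        rcases Nat.lt_or_ge k (m + 1) with h | h
        · have h2m : 2 ≤ m := by omega
          calc Wr (m + 1) ^ 2 * ((m + 1 : ℕ) + 4 / π - 1)
              = Wr (m + 1) ^ 2 * ((m : ℝ) + 1 + 4 / π - 1) := by push_cast; ring
            _ ≤ Wr m ^ 2 * (m + 4 / π - 1) := hstep m h2m
            _ ≤ _ := ih (by omega)
        · have : k = m + 1 := by omega
          subst this; exact le_refl _
    refine le_of_tendsto (tendsto_Wr_sq (4 / π - 1)) ?_
    filter_upwards [eventually_ge_atTop k] with n hn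
    calc Wr n ^ 2 * ((n : ℝ) + (4 / π - 1)) = Wr n ^ 2 * (n + 4 / π - 1) := by ring
      _ ≤ Wr k ^ 2 * (k + 4 / π - 1) := hchain n hn

theorem wallis_ratio_bounds (k : ℕ) (hk : 1 ≤ k) :
    1 / Real.sqrt (Real.pi * (k + 4 / Real.pi - 1)) ≤
      ((Nat.choose (2 * k) k : ℝ) / 4 ^ k) ∧
    ((Nat.choose (2 * k) k : ℝ) / 4 ^ k) ≤ 1 / Real.sqrt (Real.pi * (k + 1 / 4)) := by
  have hpi := Real.pi_pos
  have hW := Wr_pos k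
  have hk' : (1 : ℝ) ≤ k := by exact_mod_cast hk
  have hWdef : ((Nat.choose (2 * k) k : ℝ) / 4 ^ k) = Wr k := rfl
  rw [hWdef]
  constructor
  · have hc : (0 : ℝ) < (k : ℝ) + 4 / π - 1 := by
      have : (0 : ℝ) < 4 / π := by positivity
      linarith
    have hA : (0 : ℝ) < π * (k + 4 / π - 1) := by positivity
    have h1 : (π * ((k : ℝ) + 4 / π - 1))⁻¹ ≤ Wr k ^ 2 := by
      rw [inv_le_iff_one_le_mul₀' hA]
      have hh := h_ge k hk
      calc (1 : ℝ) = π * (1 / π) := by field_simp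
        _ ≤ π * (Wr k ^ 2 * (k + 4 / π - 1)) := mul_le_mul_of_nonneg_left hh hpi.le
        _ = π * (k + 4 / π - 1) * Wr k ^ 2 := by ring
    calc 1 / Real.sqrt (π * (k + 4 / π - 1))
        = Real.sqrt ((π * ((k : ℝ) + 4 / π - 1))⁻¹) := by rw [Real.sqrt_inv]; ring
      _ ≤ Real.sqrt (Wr k ^ 2) := Real.sqrt_le_sqrt h1
      _ = Wr k := Real.sqrt_sq hW.le
  · have hA : (0 : ℝ) < π * ((k : ℝ) + 1 / 4) := by positivity
    have h1 : Wr k ^ 2 ≤ (π * ((k : ℝ) + 1 / 4))⁻¹ := by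
      rw [← one_div, le_div_iff₀ hA]
      have hg := g_le k
      calc Wr k ^ 2 * (π * ((k : ℝ) + 1 / 4)) = π * (Wr k ^ 2 * (k + 1 / 4)) := by ring
        _ ≤ π * (1 / π) := mul_le_mul_of_nonneg_left hg hpi.le
        _ = 1 := by field_simp
    calc Wr k = Real.sqrt (Wr k ^ 2) := (Real.sqrt_sq hW.le).symm
      _ ≤ Real.sqrt ((π * ((k : ℝ) + 1 / 4))⁻¹) := Real.sqrt_le_sqrt h1
      _ = 1 / Real.sqrt (π * (k + 1 / 4)) := by rw [Real.sqrt_inv]; ring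
end

section
/- Let $d \ge 1$ and define $I = \frac{\sqrt{2d}}{\pi} \int_{0}^{\pi/2} \frac{\sqrt{1 + (2d-1)\sin^2\theta\,(\cos\theta)^{2d-2} - (\cos\theta)^{4d-2}}}{1 + (\cos\theta)^{2d}}\, d\theta$. Then $I \ge \frac{\sqrt{2d}}{2} - \sqrt{\frac{8}{\pi^3}}$. -/
open Real intervalIntegral Finset

lemma prod_telescope (k : ℕ) :
    ∏ i ∈ Finset.range k, ((2*(i:ℝ)+1)/(2*i+3)) = 1/(2*k+1) := by
  induction k with
  | zero => simp
  | succ n ih =>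
    rw [Finset.prod_range_succ, ih]
    have h1 : (2*(n:ℝ)+1) ≠ 0 := by positivity
    have h3 : (2*(n:ℝ)+3) ≠ 0 := by positivity
    push_cast
    field_simp
    ring

lemma sin_sq_eq (k : ℕ) :
    (∫ x in (0:ℝ)..π, sin x ^ (2*k))^2 * Real.Wallis.W k = π^2/(2*k+1) := by
  rw [integral_sin_pow_even, Real.Wallis.W, mul_pow, ← Finset.prod_pow, mul_assoc, ← Finset.prod_mul_distrib]
  have h : ∀ i ∈ Finset.range k, ((2*(i:ℝ)+1)/(2*i+2))^2 *
      ((2*(i:ℝ)+2)/(2*i+1) * ((2*i+2)/(2*i+3))) = (2*(i:ℝ)+1)/(2*i+3) := by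
    intro i _
    have h1 : (2*(i:ℝ)+1) ≠ 0 := by positivity
    have h2 : (2*(i:ℝ)+2) ≠ 0 := by positivity
    have h3 : (2*(i:ℝ)+3) ≠ 0 := by positivity
    field_simp
  rw [Finset.prod_congr rfl h, prod_telescope]
  ring

lemma sin_sq_le (k : ℕ) :
    (∫ x in (0:ℝ)..π, sin x ^ (2*k))^2 ≤ 4*π*(k+1)/(2*k+1)^2 := by
  have hW := Real.Wallis.le_W k
  have hWpos := Real.Wallis.W_pos k
  have hid := sin_sq_eq k
  have h1 : (2*(k:ℝ)+1) > 0 := by positivity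
  have h2 : (2*(k:ℝ)+2) > 0 := by positivity
  have hS : (∫ x in (0:ℝ)..π, sin x ^ (2*k))^2 = π^2/(2*k+1) / Real.Wallis.W k := by
    field_simp [hWpos.ne'] at hid ⊢
    linarith [hid]
  rw [hS]
  have hw' : (0:ℝ) < (2*k+1)/(2*k+2) * (π/2) := by positivity
  calc π^2/(2*(k:ℝ)+1) / Real.Wallis.W k
      ≤ π^2/(2*(k:ℝ)+1) / ((2*k+1)/(2*k+2) * (π/2)) := by
        apply div_le_div_of_nonneg_left (by positivity) hw' hW
    _ = 4*π*(k+1)/(2*k+1)^2 := by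
        field_simp
        ring

lemma cosHalfInt (m : ℕ) :
    ∫ θ in (0:ℝ)..(π/2), cos θ ^ m = (1/2) * ∫ x in (0:ℝ)..π, sin x ^ m := by
  have hint : ∀ a b : ℝ, IntervalIntegrable (fun x => sin x ^ m) MeasureTheory.volume a b :=
    fun a b => (continuous_sin.pow m).intervalIntegrable a b
  have h1 : ∫ θ in (0:ℝ)..(π/2), cos θ ^ m = ∫ θ in (0:ℝ)..(π/2), sin θ ^ m := by
    have := intervalIntegral.integral_comp_sub_left (a := 0) (b := π/2)
      (fun x => sin x ^ m) (π/2)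
    simp only [Real.sin_pi_div_two_sub] at this
    rw [this]
    norm_num
  have h2 : ∫ θ in (π/2:ℝ)..π, sin θ ^ m = ∫ θ in (0:ℝ)..(π/2), sin θ ^ m := by
    have := intervalIntegral.integral_comp_sub_left (a := 0) (b := π/2)
      (fun x => sin x ^ m) π
    simp only [Real.sin_pi_sub] at this
    have e1 : π - π/2 = π/2 := by ring
    have e2 : π - 0 = π := by ring
    rw [e1, e2] at this
    exact this.symm
  have h3 := intervalIntegral.integral_add_adjacent_intervals
    (a := 0) (b := π/2) (c := π) (hint 0 (π/2)) (hint (π/2) π)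
  rw [h1]
  linarith [h3, h2]

lemma T_sq_le (d : ℕ) (hd : 2 ≤ d) :
    (∫ θ in (0:ℝ)..(π/2), cos θ ^ (2*d-2))^2 ≤ 4/(π*d) := by
  have hm : 2*d-2 = 2*(d-1) := by omega
  rw [hm, cosHalfInt]
  have hS := sin_sq_le (d-1)
  have hcast : ((d-1:ℕ):ℝ) = (d:ℝ) - 1 := by
    have h1 : 1 ≤ d := by omega
    push_cast [h1]
    ring
  rw [hcast] at hS
  have hd3 : (2:ℝ) ≤ (d:ℝ) := by exact_mod_cast hd
  have hπ := Real.pi_pos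
  have hπ15 : π ≤ 3.15 := by linarith [Real.pi_lt_d2]
  have hπ3 : 3 ≤ π := by linarith [Real.pi_gt_three]
  rw [mul_pow]
  have key : ((d:ℝ)-1+1) = (d:ℝ) := by ring
  rw [key] at hS
  rcases eq_or_lt_of_le hd3 with h2 | h3
  · -- d = 2
    have hd2 : d = 2 := by exact_mod_cast h2.symm
    subst hd2
    norm_num
    rw [le_div_iff₀ (by positivity)]
    nlinarith [hπ15, hπ3, hπ]
  · -- d ≥ 3
    have hd3' : (3:ℝ) ≤ (d:ℝ) := by
      have h3n : 2 < d := by exact_mod_cast h3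
      have : 3 ≤ d := by omega
      exact_mod_cast this
    have hden : (0:ℝ) < (2*((d:ℝ)-1)+1)^2 := by nlinarith
    have hπsq : π^2 ≤ 9.9225 := by nlinarith
    calc (1/2:ℝ)^2 * (∫ x in (0:ℝ)..π, sin x ^ (2*(d-1)))^2
        ≤ (1/2)^2 * (4*π*(d:ℝ)/(2*((d:ℝ)-1)+1)^2) := by nlinarith [hS]
      _ = π*(d:ℝ)/(2*(d:ℝ)-1)^2 := by
          rw [show (2*((d:ℝ)-1)+1) = 2*(d:ℝ)-1 by ring]; ring
      _ ≤ 4/(π*d) := by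
          rw [div_le_div_iff₀ (by nlinarith) (by positivity)]
          nlinarith [hπsq, hd3', sq_nonneg ((d:ℝ)),
            mul_nonneg (sub_nonneg.mpr hd3') (by positivity : (0:ℝ) ≤ (d:ℝ))]

lemma pointwise_lb (d : ℕ) (hd : 1 ≤ d) (θ : ℝ) (hθ : θ ∈ Set.Icc (0:ℝ) (π/2)) :
    1 - cos θ ^ (2*d-2) ≤
      Real.sqrt (1 + (2 * (d:ℝ) - 1) * sin θ ^ 2 * cos θ ^ (2*d-2) - cos θ ^ (4*d-2)) /
        (1 + cos θ ^ (2*d)) := by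
  obtain ⟨h0, h1⟩ := hθ
  have hπ := Real.pi_pos
  have hc0 : 0 ≤ cos θ := Real.cos_nonneg_of_mem_Icc ⟨by linarith, h1⟩
  have hc1 : cos θ ≤ 1 := Real.cos_le_one θ
  set c := cos θ with hc
  have hpow : c ^ (2*d) ≤ c ^ (2*d-2) := pow_le_pow_of_le_one hc0 hc1 (by omega)
  have e1 : c^(2*d-2) * c^(2*d) = c^(4*d-2) := by rw [← pow_add]; congr 1; omega
  have hd1 : (1:ℝ) ≤ (d:ℝ) := by exact_mod_cast hd
  have hA : 0 ≤ (2 * (d:ℝ) - 1) * sin θ ^ 2 * c ^ (2*d-2) := by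
    have h2 := pow_nonneg hc0 (2*d-2)
    have h3 := sq_nonneg (sin θ)
    have : (0:ℝ) ≤ 2 * (d:ℝ) - 1 := by linarith
    exact mul_nonneg (mul_nonneg this h3) h2
  have hB1 : c^(4*d-2) ≤ 1 := pow_le_one₀ hc0 hc1
  have hB0 : 0 ≤ c^(4*d-2) := pow_nonneg hc0 _
  have hden : (0:ℝ) < 1 + c^(2*d) := by
    have := pow_nonneg hc0 (2*d); linarith
  rw [le_div_iff₀ hden]
  have key : (1 - c^(2*d-2)) * (1 + c^(2*d)) ≤ 1 - c^(4*d-2) := by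
    calc (1 - c^(2*d-2)) * (1 + c^(2*d))
        = 1 + c^(2*d) - c^(2*d-2) - c^(2*d-2) * c^(2*d) := by ring
      _ = 1 + c^(2*d) - c^(2*d-2) - c^(4*d-2) := by rw [e1]
      _ ≤ 1 - c^(4*d-2) := by linarith
  have h1B : 0 ≤ 1 - c^(4*d-2) := by linarith
  have step2 : 1 - c^(4*d-2) ≤ Real.sqrt (1 - c^(4*d-2)) := by
    have hs1 : Real.sqrt (1 - c^(4*d-2)) ≤ 1 := by
      have h := Real.sqrt_le_sqrt (show 1 - c^(4*d-2) ≤ 1 by linarith)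
      rwa [Real.sqrt_one] at h
    nlinarith [Real.sq_sqrt h1B, Real.sqrt_nonneg (1 - c^(4*d-2))]
  have step3 : Real.sqrt (1 - c^(4*d-2)) ≤
      Real.sqrt (1 + (2 * (d:ℝ) - 1) * sin θ ^ 2 * c ^ (2*d-2) - c^(4*d-2)) :=
    Real.sqrt_le_sqrt (by linarith)
  linarith

lemma cont_integrand (d : ℕ) :
    Continuous (fun θ : ℝ =>
      Real.sqrt (1 + (2 * (d:ℝ) - 1) * sin θ ^ 2 * cos θ ^ (2*d-2) - cos θ ^ (4*d-2)) /
        (1 + cos θ ^ (2*d))) := by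
  apply Continuous.div
  · exact Real.continuous_sqrt.comp (by fun_prop)
  · fun_prop
  · intro x
    have h := (even_two_mul d).pow_nonneg (cos x)
    positivity

set_option maxHeartbeats 1000000 in
theorem expected_roots_lower_bound (d : ℕ) (hd : 1 ≤ d) (I : ℝ)
    (hI : I = Real.sqrt (2 * d) / Real.pi *
        ∫ θ in (0:ℝ)..(Real.pi / 2),
          Real.sqrt (1 + (2 * d - 1) * (Real.sin θ) ^ 2 * (Real.cos θ) ^ (2 * d - 2) -
                (Real.cos θ) ^ (4 * d - 2)) / (1 + (Real.cos θ) ^ (2 * d))) :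
    Real.sqrt (2 * d) / 2 - Real.sqrt (8 / Real.pi ^ 3) ≤ I := by
  have hπ := Real.pi_pos
  have hπ3 : 3 ≤ π := by linarith [Real.pi_gt_three]
  have hπ15 : π ≤ 3.15 := by linarith [Real.pi_lt_d2]
  have h8 : Real.sqrt (8/π^3) ^ 2 = 8/π^3 := Real.sq_sqrt (by positivity)
  have h8n : 0 ≤ Real.sqrt (8/π^3) := Real.sqrt_nonneg _
  have h8' : Real.sqrt (8/π^3) ^ 2 * π^3 = 8 := by
    rw [h8]; field_simp
  rcases Nat.lt_or_ge d 2 with hd2 | hd2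
  · -- d = 1
    have hd1 : d = 1 := by omega
    subst hd1
    have hptw : ∀ θ ∈ Set.Icc (0:ℝ) (π/2), Real.sqrt 2 / 2 * sin θ ≤
        Real.sqrt (1 + (2 * (1:ℕ) - 1) * (sin θ) ^ 2 * (cos θ) ^ (2 * 1 - 2) -
            (cos θ) ^ (4 * 1 - 2)) / (1 + (cos θ) ^ (2 * 1)) := by
      intro θ hθ
      obtain ⟨ha, hb⟩ := hθ
      have hs0 : 0 ≤ sin θ := Real.sin_nonneg_of_nonneg_of_le_pi ha (by linarith)
      have hpyt := Real.sin_sq_add_cos_sq θ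
      have hc2 : cos θ ^ 2 ≤ 1 := by nlinarith [sq_nonneg (sin θ)]
      have hc2' : 0 ≤ cos θ ^ 2 := sq_nonneg _
      norm_num
      have harg : 1 + sin θ ^ 2 - cos θ ^ 2 = 2 * sin θ ^ 2 := by nlinarith
      rw [harg, show (2:ℝ) * sin θ ^ 2 = 2 * sin θ ^ 2 from rfl]
      rw [Real.sqrt_mul (by norm_num) (sin θ ^ 2), Real.sqrt_sq hs0]
      rw [le_div_iff₀ (by positivity)]
      nlinarith [Real.sqrt_nonneg 2, hs0, hc2, mul_nonneg (Real.sqrt_nonneg 2) hs0]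
    have hmono : ∫ θ in (0:ℝ)..(π/2), Real.sqrt 2 / 2 * sin θ ≤
        ∫ θ in (0:ℝ)..(π/2),
          Real.sqrt (1 + (2 * (1:ℕ) - 1) * (sin θ) ^ 2 * (cos θ) ^ (2 * 1 - 2) -
              (cos θ) ^ (4 * 1 - 2)) / (1 + (cos θ) ^ (2 * 1)) := by
      apply intervalIntegral.integral_mono_on (by positivity)
      · exact (by fun_prop : Continuous fun θ:ℝ => Real.sqrt 2 / 2 * sin θ).intervalIntegrable _ _
      · exact (cont_integrand 1).intervalIntegrable _ _
      · exact hptw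
    have hval : ∫ θ in (0:ℝ)..(π/2), Real.sqrt 2 / 2 * sin θ = Real.sqrt 2 / 2 := by
      rw [intervalIntegral.integral_const_mul, integral_sin]
      simp
    rw [hval] at hmono
    have hIlb : 1/π ≤ I := by
      rw [hI]
      have hcast : Real.sqrt (2 * (1:ℕ)) = Real.sqrt 2 := by norm_num
      rw [hcast]
      calc 1/π = Real.sqrt 2 / π * (Real.sqrt 2 / 2) := by
            rw [div_mul_div_comm, Real.mul_self_sqrt (by norm_num)]
            ring
        _ ≤ _ := mul_le_mul_of_nonneg_left hmono (by positivity)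
    have hs2sq : Real.sqrt 2 ^ 2 = 2 := Real.sq_sqrt (by norm_num)
    have hs2n : 0 ≤ Real.sqrt 2 := Real.sqrt_nonneg 2
    have hs2 : Real.sqrt 2 ≤ 1.42 := by nlinarith
    have hπsq : π^2 ≤ 9.9225 := by nlinarith
    have hπcube : π^3 ≤ 32 := by nlinarith [mul_le_mul_of_nonneg_right hπsq (le_of_lt hπ)]
    have hs8 : (1:ℝ)/2 ≤ Real.sqrt (8/π^3) := by nlinarith
    have hfrac : (21:ℝ)/100 ≤ 1/π := by
      rw [div_le_div_iff₀ (by norm_num) hπ]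
      nlinarith
    have hcast2 : Real.sqrt (2 * ((1:ℕ):ℝ)) = Real.sqrt 2 := by norm_num
    rw [hcast2]
    linarith
  · -- d ≥ 2
    set T := ∫ θ in (0:ℝ)..(π/2), cos θ ^ (2*d-2) with hTdef
    have hmono : ∫ θ in (0:ℝ)..(π/2), (1 - cos θ ^ (2*d-2)) ≤
        ∫ θ in (0:ℝ)..(π/2),
          Real.sqrt (1 + (2 * (d:ℝ) - 1) * (sin θ) ^ 2 * (cos θ) ^ (2 * d - 2) -
              (cos θ) ^ (4 * d - 2)) / (1 + (cos θ) ^ (2 * d)) := by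
      apply intervalIntegral.integral_mono_on (by positivity)
      · exact (by fun_prop : Continuous fun θ:ℝ => 1 - cos θ ^ (2*d-2)).intervalIntegrable _ _
      · exact (cont_integrand d).intervalIntegrable _ _
      · exact pointwise_lb d hd
    have hsub : ∫ θ in (0:ℝ)..(π/2), (1 - cos θ ^ (2*d-2)) = π/2 - T := by
      rw [intervalIntegral.integral_sub intervalIntegrable_const
        ((by fun_prop : Continuous fun θ:ℝ => cos θ ^ (2*d-2)).intervalIntegrable _ _)]
      simp [hTdef]
    rw [hsub] at hmono
    have hT0 : 0 ≤ T := by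
      apply intervalIntegral.integral_nonneg (by positivity)
      intro x hx
      exact pow_nonneg (Real.cos_nonneg_of_mem_Icc ⟨by linarith [hx.1], hx.2⟩) _
    have hK0 : (0:ℝ) ≤ Real.sqrt (2*d) / π := by positivity
    have hIge : Real.sqrt (2*d)/π * (π/2 - T) ≤ I := by
      rw [hI]
      exact mul_le_mul_of_nonneg_left hmono hK0
    have hexp : Real.sqrt (2*(d:ℝ))/π * (π/2 - T) =
        Real.sqrt (2*(d:ℝ))/2 - Real.sqrt (2*(d:ℝ))/π * T := by
      field_simp
    rw [hexp] at hIge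
    have hkey : Real.sqrt (2*(d:ℝ))/π * T ≤ Real.sqrt (8/π^3) := by
      apply Real.le_sqrt_of_sq_le
      have hsq : (Real.sqrt (2*(d:ℝ))/π * T)^2 = 2*(d:ℝ)*T^2/π^2 := by
        rw [mul_pow, div_pow, Real.sq_sqrt (by positivity : (0:ℝ) ≤ 2*(d:ℝ))]
        ring
      rw [hsq]
      have hTsq := T_sq_le d hd2
      have hdpos : (0:ℝ) < (d:ℝ) := by
        have : (2:ℝ) ≤ (d:ℝ) := by exact_mod_cast hd2
        linarith
      rw [div_le_div_iff₀ (by positivity) (by positivity)]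
      have h1 : T^2 * (π*(d:ℝ)) ≤ 4 := by
        have := mul_le_mul_of_nonneg_right hTsq (le_of_lt (by positivity : (0:ℝ) < π*(d:ℝ)))
        calc T^2 * (π*(d:ℝ)) ≤ 4/(π*(d:ℝ)) * (π*(d:ℝ)) := this
          _ = 4 := by field_simp
      nlinarith [mul_le_mul_of_nonneg_right h1 (sq_nonneg π)]
    linarith
end
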